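/- Under the assumptions of the previous estimate, if additionally M := sup_{t≥0} ∫₀ᵗ γ(ξ)dξ < ∞, then g is bounded: g(t) ≤ e^M (M₃^{1/(p−1)} − ω) for all t ≥ 0, where M₃ := 1 / [ (g(0)+ω)^{1−p} − (p−1)∫₀^∞ α(ξ)/ν(ξ)^{p−1} dξ ]. -/

import Mathlib

open MeasureTheory intervalIntegral Real Filter Set Topology NNReal
set_option maxHeartbeats 1000000

lemma visc {a b : ℝ} {f B : ℝ → ℝ}
    (hf : ContinuousOn f (Set.Icc a b)) (hB : ContinuousOn B (Set.Icc a b))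
    (h0 : f a ≤ B a)
    (key : ∀ x ∈ Set.Ico a b, f x = B x → ∀ᶠ z in 𝓝[>] x, f z ≤ B z) :
    ∀ x ∈ Set.Icc a b, f x ≤ B x := by
  rcases le_or_gt a b with hab | hab
  · have hcl : IsClosed ({x | f x ≤ B x} ∩ Icc a b) := by
      have : {x | f x ≤ B x} ∩ Icc a b = Icc a b ∩ (fun x => f x - B x) ⁻¹' Iic 0 := by
        ext x; simp [and_comm, sub_nonpos]
      rw [this]
      exact (hf.sub hB).preimage_isClosed_of_isClosed isClosed_Icc isClosed_Iic
    intro x hx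
    refine IsClosed.Icc_subset_of_forall_mem_nhdsWithin hcl h0 ?_ hx
    rintro y ⟨hys, hy⟩
    have hyle : f y ≤ B y := hys
    rcases eq_or_lt_of_le hyle with heq | hlt
    · exact key y hy heq
    · have hcont : ContinuousWithinAt (fun z => f z - B z) (Icc a b) y :=
        (hf.sub hB) y ⟨hy.1, hy.2.le⟩
      have hev : ∀ᶠ z in 𝓝[Icc a b] y, f z - B z < 0 :=
        Filter.Tendsto.eventually_lt_const (sub_neg.mpr hlt) hcont
      have h2 : 𝓝[>] y ≤ 𝓝[Icc a b] y := by
        rw [← nhdsWithin_Ioc_eq_nhdsGT hy.2]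
        exact nhdsWithin_mono _ (fun z hz => ⟨hy.1.trans hz.1.le, hz.2⟩)
      filter_upwards [h2 hev] with z hz
      exact le_of_lt (sub_neg.mp hz)
  · intro x hx; exact absurd (hx.1.trans hx.2) (not_le.mpr hab)

lemma primitive_slope {T : ℝ} {w : ℝ → EReal} (hw : LowerSemicontinuous w)
    (hint : IntegrableOn (fun z => (w z).toReal) (Set.Ioc 0 T))
    (hfin : ∀ᵐ z ∂(volume.restrict (Set.Ioc 0 T)), w z < ⊤)
    {x K : ℝ} (hx : x ∈ Set.Ico 0 T) (hK : (K : EReal) < w x) :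
    ∀ᶠ z in 𝓝[>] x, K * (z - x) ≤ ∫ s in x..z, (w s).toReal := by
  have hU : ∀ᶠ s in 𝓝 x, (K : EReal) < w s := hw x _ hK
  rcases Metric.eventually_nhds_iff.mp hU with ⟨δ, hδ, hball⟩
  have hfin' : ∀ᵐ z, z ∈ Set.Ioc 0 T → w z < ⊤ := (ae_restrict_iff' measurableSet_Ioc).mp hfin
  have hmem : Set.Ioc x (min (x + δ/2) T) ∈ 𝓝[>] x :=
    Ioc_mem_nhdsGT_of_mem ⟨le_rfl, lt_min (by linarith) hx.2⟩
  filter_upwards [hmem] with z hz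
  have hxz : x ≤ z := hz.1.le
  have hsub : Set.Ioc x z ⊆ Set.Ioc 0 T := fun s hs =>
    ⟨hx.1.trans_lt hs.1, hs.2.trans (hz.2.trans (min_le_right _ _))⟩
  have hii : IntervalIntegrable (fun s => (w s).toReal) volume x z :=
    (intervalIntegrable_iff_integrableOn_Ioc_of_le hxz).mpr (hint.mono_set hsub)
  have hmono : (fun _ => K) ≤ᵐ[volume.restrict (Set.Icc x z)] fun s => (w s).toReal := by
    rw [← Measure.restrict_congr_set Ioc_ae_eq_Icc]
    filter_upwards [ae_restrict_mem (measurableSet_Ioc : MeasurableSet (Set.Ioc x z)), ae_restrict_of_ae hfin'] with s hmem' hs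
    have h1 : (K : EReal) < w s := by
      apply hball
      rw [Real.dist_eq, abs_sub_lt_iff]
      have h3 := hmem'.1; have h4 := hmem'.2
      have h5 : z ≤ x + δ/2 := hz.2.trans (min_le_left _ _)
      constructor <;> linarith
    have h2 : w s < ⊤ := hs (hsub hmem')
    calc K = ((K : EReal)).toReal := by simp
    _ ≤ (w s).toReal := EReal.toReal_le_toReal h1.le (by simp) h2.ne
  calc K * (z - x) = ∫ _ in x..z, K := by
        rw [intervalIntegral.integral_const, smul_eq_mul]; ring
  _ ≤ ∫ s in x..z, (w s).toReal :=
      intervalIntegral.integral_mono_ae_restrict hxz intervalIntegrable_const hii hmono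

lemma add_rpow_le {a b p : ℝ} (ha : 0 ≤ a) (hb : 0 ≤ b) (hp : 1 ≤ p) :
    a ^ p + b ^ p ≤ (a + b) ^ p := by
  have key := NNReal.add_rpow_le_rpow_add a.toNNReal b.toNNReal hp
  have h := (NNReal.coe_le_coe).mpr key
  push_cast [NNReal.coe_rpow] at h
  rwa [Real.coe_toNNReal a ha, Real.coe_toNNReal b hb] at h

lemma rpow_tangent {C p y1 y2 : ℝ} (hp : 1 < p) (h12 : y1 ≤ y2)
    (hpos : 0 < C - (p - 1) * y2) :
    (C - (p - 1) * y1) ^ (-(p - 1)⁻¹ - 1) * (y2 - y1) ≤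
      (C - (p - 1) * y2) ^ (-(p - 1)⁻¹) - (C - (p - 1) * y1) ^ (-(p - 1)⁻¹) := by
  have hp1 : (0:ℝ) < p - 1 := by linarith
  set q : ℝ := (p - 1)⁻¹ with hq
  have hqpos : 0 < q := by positivity
  have hposy : ∀ y ∈ Set.Icc y1 y2, 0 < C - (p - 1) * y := by
    intro y hy
    have : (p - 1) * y ≤ (p - 1) * y2 := by nlinarith [hy.2]
    linarith
  have hderiv : ∀ y ∈ Set.uIcc y1 y2, HasDerivAt (fun y => (C - (p - 1) * y) ^ (-q))
      ((C - (p - 1) * y) ^ (-q - 1)) y := by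
    intro y hy
    rw [Set.uIcc_of_le h12] at hy
    have hinner : HasDerivAt (fun y : ℝ => C - (p - 1) * y) (-(p - 1)) y := by
      simpa using ((hasDerivAt_id y).const_mul (p - 1)).const_sub C
    have hr := (Real.hasDerivAt_rpow_const (p := -q) (Or.inl (hposy y hy).ne')).comp y hinner
    have hqm : q * (p - 1) = 1 := inv_mul_cancel₀ hp1.ne'
    refine hr.congr_deriv ?_
    have heq : -q * (C - (p - 1) * y) ^ (-q - 1) * -(p - 1)
        = q * (p - 1) * (C - (p - 1) * y) ^ (-q - 1) := by ring
    rw [heq, hqm, one_mul]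
  have hcont : ContinuousOn (fun y => (C - (p - 1) * y) ^ (-q - 1)) (Set.uIcc y1 y2) := by
    apply ContinuousOn.rpow_const
    · fun_prop
    · intro y hy
      rw [Set.uIcc_of_le h12] at hy
      exact Or.inl (hposy y hy).ne'
  have hftc := intervalIntegral.integral_eq_sub_of_hasDerivAt hderiv hcont.intervalIntegrable
  rw [← hftc]
  calc (C - (p - 1) * y1) ^ (-q - 1) * (y2 - y1)
      = ∫ _ in y1..y2, (C - (p - 1) * y1) ^ (-q - 1) := by
        rw [intervalIntegral.integral_const, smul_eq_mul]; ring
  _ ≤ ∫ y in y1..y2, (C - (p - 1) * y) ^ (-q - 1) := by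
      apply intervalIntegral.integral_mono_on h12 intervalIntegrable_const
        hcont.intervalIntegrable
      intro y hy
      exact Real.rpow_le_rpow_of_nonpos (hposy y hy)
        (by nlinarith [hy.1]) (by linarith)


lemma aux_bound
    (g γ α β ν : ℝ → ℝ) (p ω M : ℝ) (hp : 1 < p) (hω : 0 < ω)
    (hγ : LocallyIntegrable γ) (hα : LocallyIntegrable α)
    (hαpos : ∀ t, 0 ≤ α t) (hβpos : ∀ t, 0 ≤ β t)
    (hg0 : ∀ t ≥ 0, 0 ≤ g t) (hgdiff : Differentiable ℝ g)
    (hineq : ∀ t ≥ 0, deriv g t ≤ γ t * g t + α t * g t ^ p + β t)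
    (hν : ∀ t, ν t = Real.exp (-∫ ξ in (0:ℝ)..t, γ ξ))
    (hsmall : ∀ t ≥ 0, β t * ν t ^ p ≤ ω ^ p * α t)
    (hαν : IntegrableOn (fun ξ => α ξ / ν ξ ^ (p - 1)) (Set.Ioi (0:ℝ)))
    (hM : ∀ t ≥ 0, (∫ ξ in (0:ℝ)..t, γ ξ) ≤ M)
    (t₀ : ℝ) (ht₀ : 0 ≤ t₀) (ε : ℝ) (hε : 0 < ε)
    (hsmallε : (p - 1) * (Real.exp ((p - 1) * ε) *
        (∫ ξ in Set.Ioi (0:ℝ), α ξ / ν ξ ^ (p - 1)) + ε) < (g 0 + ω) ^ (1 - p)) :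
    g t₀ ≤ Real.exp (M + ε) *
      (((g 0 + ω) ^ (1 - p) - (p - 1) * (Real.exp ((p - 1) * ε) *
          (∫ ξ in Set.Ioi (0:ℝ), α ξ / ν ξ ^ (p - 1)) + ε)) ^ (-(p - 1)⁻¹) - ω) := by
  have hp1 : (0:ℝ) < p - 1 := by linarith
  set q : ℝ := (p - 1)⁻¹ with hq
  have hqpos : 0 < q := by positivity
  set A : ℝ → ℝ := fun ξ => α ξ / ν ξ ^ (p - 1) with hA
  set I : ℝ := ∫ ξ in Set.Ioi (0:ℝ), A ξ with hI
  set C : ℝ := (g 0 + ω) ^ (1 - p) with hC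
  set Iε : ℝ := Real.exp ((p - 1) * ε) * I + ε with hIε
  set F : ℝ → ℝ := fun s => ∫ ξ in (0:ℝ)..s, γ ξ with hF
  have hgω : 0 < g 0 + ω := by have := hg0 0 le_rfl; linarith
  have hνpos : ∀ s, 0 < ν s := fun s => by rw [hν s]; exact Real.exp_pos _
  have hνe : ∀ s, ν s = Real.exp (-F s) := hν
  have hApos : ∀ ξ, 0 ≤ A ξ := fun ξ => div_nonneg (hαpos ξ)
    (Real.rpow_nonneg (hνpos ξ).le _)
  -- the restricted measure is weakly regular
  haveI : Fact ((volume : Measure ℝ) (Set.Ioc 0 t₀) < ⊤) := ⟨measure_Ioc_lt_top⟩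
  haveI hwr : (volume.restrict (Set.Ioc 0 t₀)).WeaklyRegular :=
    Measure.WeaklyRegular.restrict_of_measure_ne_top measure_Ioc_lt_top.ne
  -- integrability of γ on the window
  have hγint : IntegrableOn γ (Set.Ioc 0 t₀) :=
    (hγ.integrableOn_isCompact isCompact_Icc).mono_set Set.Ioc_subset_Icc_self
  -- Vitali–Carathéodory majorant of γ
  obtain ⟨wγ, hwγgt, hwγlsc, hwγint, hwγfin, hwγlt⟩ :=
    exists_lt_lowerSemicontinuous_integral_lt (μ := volume.restrict (Set.Ioc 0 t₀))
      γ hγint hε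
  set Fg : ℝ → ℝ := fun s => ∫ ξ in (0:ℝ)..s, (wγ ξ).toReal with hFg
  set νe : ℝ → ℝ := fun s => Real.exp (-Fg s) with hνedef
  have hwγint' : IntegrableOn (fun ξ => (wγ ξ).toReal) (Set.Ioc 0 t₀) := hwγint
  have hwγae : ∀ᵐ ξ, ξ ∈ Set.Ioc 0 t₀ → γ ξ ≤ (wγ ξ).toReal := by
    filter_upwards [(ae_restrict_iff' measurableSet_Ioc).mp hwγfin] with ξ hfin hmem
    calc γ ξ = ((γ ξ : EReal)).toReal := by simp
    _ ≤ (wγ ξ).toReal := EReal.toReal_le_toReal (hwγgt ξ).le (by simp) (hfin hmem).ne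
  have hγii : ∀ s ∈ Set.Icc 0 t₀, IntervalIntegrable γ volume 0 s := fun s hs =>
    (intervalIntegrable_iff_integrableOn_Ioc_of_le hs.1).mpr
      (hγint.mono_set (Set.Ioc_subset_Ioc le_rfl hs.2))
  have hwγii : ∀ s ∈ Set.Icc 0 t₀, IntervalIntegrable (fun ξ => (wγ ξ).toReal) volume 0 s :=
    fun s hs => (intervalIntegrable_iff_integrableOn_Ioc_of_le hs.1).mpr
      (hwγint'.mono_set (Set.Ioc_subset_Ioc le_rfl hs.2))
  -- F ≤ Fg ≤ F + ε on the window
  have hFle : ∀ s ∈ Set.Icc 0 t₀, F s ≤ Fg s := by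
    intro s hs
    apply intervalIntegral.integral_mono_ae_restrict hs.1 (hγii s hs) (hwγii s hs)
    rw [← Measure.restrict_congr_set Ioc_ae_eq_Icc]
    filter_upwards [ae_restrict_mem (measurableSet_Ioc : MeasurableSet (Set.Ioc 0 s)),
      ae_restrict_of_ae hwγae] with ξ hξ h2
    exact h2 (Set.Ioc_subset_Ioc le_rfl hs.2 hξ)
  have hFge : ∀ s ∈ Set.Icc 0 t₀, Fg s ≤ F s + ε := by
    intro s hs
    have hsub : Set.Ioc 0 s ⊆ Set.Ioc 0 t₀ := Set.Ioc_subset_Ioc le_rfl hs.2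
    have hdiffint : IntegrableOn (fun ξ => (wγ ξ).toReal - γ ξ) (Set.Ioc 0 t₀) :=
      hwγint'.sub hγint
    have h1 : Fg s - F s = ∫ ξ in Set.Ioc 0 s, ((wγ ξ).toReal - γ ξ) := by
      have e1 : Fg s = ∫ ξ in Set.Ioc 0 s, (wγ ξ).toReal := intervalIntegral.integral_of_le hs.1
      have e2 : F s = ∫ ξ in Set.Ioc 0 s, γ ξ := intervalIntegral.integral_of_le hs.1
      rw [e1, e2, ← integral_sub (hwγint'.mono_set hsub) (hγint.mono_set hsub)]
    have h2 : (∫ ξ in Set.Ioc 0 s, ((wγ ξ).toReal - γ ξ))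
        ≤ ∫ ξ in Set.Ioc 0 t₀, ((wγ ξ).toReal - γ ξ) := by
      apply setIntegral_mono_set hdiffint
      · filter_upwards [ae_restrict_of_ae hwγae,
          ae_restrict_mem (measurableSet_Ioc : MeasurableSet (Set.Ioc 0 t₀))] with ξ h3 h4
        simpa using h3 h4
      · exact hsub.eventuallyLE
    have h3 : (∫ ξ in Set.Ioc 0 t₀, ((wγ ξ).toReal - γ ξ)) < ε := by
      rw [integral_sub hwγint' hγint]
      linarith [hwγlt]
    linarith [h1, h2, h3]
  -- continuity of Fg
  have hFgcont : ContinuousOn Fg (Set.Icc 0 t₀) := by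
    have h := intervalIntegral.continuousOn_primitive_interval (a := (0:ℝ)) (b := t₀)
      (f := fun ξ => (wγ ξ).toReal) (μ := volume)
      (by rw [Set.uIcc_of_le ht₀, integrableOn_Icc_iff_integrableOn_Ioc]; exact hwγint')
    rwa [Set.uIcc_of_le ht₀] at h
  -- the transformed coefficient
  set Ae : ℝ → ℝ := fun ξ => α ξ * Real.exp ((p - 1) * Fg ξ) with hAe
  have hAepos : ∀ ξ, 0 ≤ Ae ξ := fun ξ => mul_nonneg (hαpos ξ) (Real.exp_pos _).le
  have hAeint : IntegrableOn Ae (Set.Ioc 0 t₀) := by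
    have h1 : IntegrableOn α (Set.Icc 0 t₀) := hα.integrableOn_isCompact isCompact_Icc
    have h2 : ContinuousOn (fun ξ => Real.exp ((p - 1) * Fg ξ)) (Set.Icc 0 t₀) :=
      Real.continuous_exp.comp_continuousOn (hFgcont.const_smul (p-1))
    exact (h1.mul_continuousOn h2 isCompact_Icc).mono_set Set.Ioc_subset_Icc_self
  -- Ae is controlled by A
  have hAeA : ∀ ξ ∈ Set.Icc 0 t₀, Ae ξ ≤ Real.exp ((p - 1) * ε) * A ξ := by
    intro ξ hξ
    have e1 : A ξ = α ξ * Real.exp ((p - 1) * F ξ) := by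
      show α ξ / ν ξ ^ (p - 1) = _
      have : ν ξ ^ (p - 1) = Real.exp (-F ξ * (p - 1)) := by
        rw [hνe ξ, ← Real.exp_mul]
      rw [this, div_eq_mul_inv, ← Real.exp_neg]
      ring_nf
    rw [e1]
    have h2 : Real.exp ((p - 1) * Fg ξ) ≤ Real.exp ((p - 1) * ε) * Real.exp ((p - 1) * F ξ) := by
      rw [← Real.exp_add]
      apply Real.exp_le_exp.mpr
      have h3 := mul_le_mul_of_nonneg_left (hFge ξ hξ) hp1.le
      linarith only [h3]
    calc α ξ * Real.exp ((p - 1) * Fg ξ) ≤ α ξ * (Real.exp ((p - 1) * ε) * Real.exp ((p - 1) * F ξ)) :=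
          mul_le_mul_of_nonneg_left h2 (hαpos ξ)
    _ = Real.exp ((p - 1) * ε) * (α ξ * Real.exp ((p - 1) * F ξ)) := by ring
  have hAIoc : IntegrableOn A (Set.Ioc 0 t₀) := hαν.mono_set Set.Ioc_subset_Ioi_self
  have hAeIle : (∫ ξ in Set.Ioc 0 t₀, Ae ξ) ≤ Real.exp ((p - 1) * ε) * I := by
    calc (∫ ξ in Set.Ioc 0 t₀, Ae ξ) ≤ ∫ ξ in Set.Ioc 0 t₀, Real.exp ((p - 1) * ε) * A ξ := by
          apply setIntegral_mono_on hAeint (hAIoc.const_mul _) measurableSet_Ioc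
          intro ξ hξ; exact hAeA ξ (Set.Ioc_subset_Icc_self hξ)
    _ = Real.exp ((p - 1) * ε) * ∫ ξ in Set.Ioc 0 t₀, A ξ := integral_const_mul _ _
    _ ≤ Real.exp ((p - 1) * ε) * I := by
          apply mul_le_mul_of_nonneg_left _ (Real.exp_pos _).le
          apply setIntegral_mono_set hαν (ae_restrict_of_ae (ae_of_all _ hApos))
            Set.Ioc_subset_Ioi_self.eventuallyLE
  -- Vitali–Carathéodory majorant of Ae
  obtain ⟨wA, hwAgt, hwAlsc, hwAint, hwAfin, hwAlt⟩ :=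
    exists_lt_lowerSemicontinuous_integral_lt (μ := volume.restrict (Set.Ioc 0 t₀))
      Ae hAeint hε
  have hwAint' : IntegrableOn (fun ξ => (wA ξ).toReal) (Set.Ioc 0 t₀) := hwAint
  set W : ℝ → ℝ := fun s => ∫ ξ in (0:ℝ)..s, (wA ξ).toReal with hW
  have hwAae : ∀ᵐ ξ, ξ ∈ Set.Ioc 0 t₀ → Ae ξ ≤ (wA ξ).toReal := by
    filter_upwards [(ae_restrict_iff' measurableSet_Ioc).mp hwAfin] with ξ hfin hmem
    calc Ae ξ = ((Ae ξ : EReal)).toReal := by simp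
    _ ≤ (wA ξ).toReal := EReal.toReal_le_toReal (hwAgt ξ).le (by simp) (hfin hmem).ne
  have hWcont : ContinuousOn W (Set.Icc 0 t₀) := by
    have h := intervalIntegral.continuousOn_primitive_interval (a := (0:ℝ)) (b := t₀)
      (f := fun ξ => (wA ξ).toReal) (μ := volume)
      (by rw [Set.uIcc_of_le ht₀, integrableOn_Icc_iff_integrableOn_Ioc]; exact hwAint')
    rwa [Set.uIcc_of_le ht₀] at h
  have hWIoc : ∀ s ∈ Set.Icc 0 t₀, W s = ∫ ξ in Set.Ioc 0 s, (wA ξ).toReal := fun s hs =>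
    intervalIntegral.integral_of_le hs.1
  have hWub : ∀ s ∈ Set.Icc 0 t₀, W s < Iε := by
    intro s hs
    have hsub : Set.Ioc 0 s ⊆ Set.Ioc 0 t₀ := Set.Ioc_subset_Ioc le_rfl hs.2
    have h1 : W s ≤ ∫ ξ in Set.Ioc 0 t₀, (wA ξ).toReal := by
      rw [hWIoc s hs]
      apply setIntegral_mono_set hwAint'
      · filter_upwards [ae_restrict_of_ae hwAae,
          ae_restrict_mem (measurableSet_Ioc : MeasurableSet (Set.Ioc 0 t₀))] with ξ h3 h4
        exact le_trans (hAepos ξ) (h3 h4)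
      · exact hsub.eventuallyLE
    calc W s ≤ ∫ ξ in Set.Ioc 0 t₀, (wA ξ).toReal := h1
    _ < (∫ ξ in Set.Ioc 0 t₀, Ae ξ) + ε := hwAlt
    _ ≤ Iε := by rw [hIε]; linarith [hAeIle]
  have hW0 : (0:ℝ) ≤ W 0 := by simp [hW]
  have hWpos : ∀ s ∈ Set.Icc 0 t₀, 0 ≤ W s := by
    intro s hs
    rw [hWIoc s hs]
    have hsub : Set.Ioc 0 s ⊆ Set.Ioc 0 t₀ := Set.Ioc_subset_Ioc le_rfl hs.2
    apply setIntegral_nonneg_ae measurableSet_Ioc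
    filter_upwards [hwAae] with ξ h1 h2
    exact le_trans (hAepos ξ) (h1 (hsub h2))
  -- the comparison function
  have hCpos : 0 < C - (p - 1) * Iε := by linarith [hsmallε]
  have hCW : ∀ s ∈ Set.Icc 0 t₀, 0 < C - (p - 1) * W s := by
    intro s hs
    have h1 := mul_lt_mul_of_pos_left (hWub s hs) hp1
    linarith only [h1, hsmallε]
  set B : ℝ → ℝ := fun s => (C - (p - 1) * W s) ^ (-q) with hB
  set φ : ℝ → ℝ := fun s => νe s * g s + ω with hφ
  have hφcont : ContinuousOn φ (Set.Icc 0 t₀) := by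
    apply ContinuousOn.add _ continuousOn_const
    exact (Real.continuous_exp.comp_continuousOn hFgcont.neg).mul
      hgdiff.continuous.continuousOn
  have hBcont : ContinuousOn B (Set.Icc 0 t₀) := by
    apply ContinuousOn.rpow_const
    · exact continuousOn_const.sub (hWcont.const_smul (p - 1))
    · intro s hs; exact Or.inl (hCW s hs).ne'
  have hωφ : ∀ s ∈ Set.Icc 0 t₀, ω ≤ φ s := by
    intro s hs
    have : 0 ≤ νe s * g s := mul_nonneg (Real.exp_pos _).le (hg0 s hs.1)
    simp only [hφ]; linarith
  have hFg0 : Fg 0 = 0 := intervalIntegral.integral_same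
  have hWzero : W 0 = 0 := intervalIntegral.integral_same
  have h0 : φ 0 ≤ B 0 := by
    have e1 : φ 0 = g 0 + ω := by simp [hφ, hνedef, hFg0]
    have e2 : B 0 = g 0 + ω := by
      simp only [hB, hWzero, mul_zero, sub_zero, hC]
      rw [← Real.rpow_mul hgω.le]
      have : (1 - p) * -q = 1 := by rw [hq]; field_simp; ring
      rw [this, Real.rpow_one]
    rw [e1, e2]
  have key : ∀ x ∈ Set.Ico 0 t₀, φ x = B x → ∀ᶠ z in 𝓝[>] x, φ z ≤ B z := by
    intro x hx hcontact
    have hx0 : (0:ℝ) ≤ x := hx.1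
    have hxt : x < t₀ := hx.2
    have hxm : x ∈ Set.Icc 0 t₀ := ⟨hx0, hxt.le⟩
    obtain ⟨K, hK1, hK2⟩ := EReal.exists_between_coe_real (hwγgt x)
    obtain ⟨KA, hKA1, hKA2⟩ := EReal.exists_between_coe_real (hwAgt x)
    have hKγ : γ x < K := by exact_mod_cast hK1
    have hKAgt : Ae x < KA := by exact_mod_cast hKA1
    have hKAnn : (0:ℝ) ≤ KA := le_of_lt (lt_of_le_of_lt (hAepos x) hKAgt)
    set D : ℝ := C - (p - 1) * W x with hD
    have hDpos : 0 < D := hCW x hxm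
    set d : ℝ := D ^ (-q - 1) with hd
    have hdpos : 0 < d := Real.rpow_pos_of_pos hDpos _
    set r : ℝ := KA * d with hr
    have hgx0 : 0 ≤ g x := hg0 x hx0
    have hνex : 0 < νe x := Real.exp_pos _
    -- φ x ^ p = d
    have hφxp : φ x ^ p = d := by
      rw [hcontact]
      show ((C - (p - 1) * W x) ^ (-q)) ^ p = d
      rw [← Real.rpow_mul hDpos.le]
      congr 1
      rw [hq]; field_simp; ring
    -- V < r
    set V : ℝ := νe x * (α x * g x ^ p + β x) with hV
    have hVr : V < r := by
      have e1 : νe x * (α x * g x ^ p) = Ae x * (νe x * g x) ^ p := by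
        rw [Real.mul_rpow hνex.le hgx0]
        have h7 : νe x ^ p = Real.exp (-Fg x * p) := by
          simp only [hνedef]; rw [← Real.exp_mul]
        have h8 : Real.exp ((p - 1) * Fg x) * Real.exp (-Fg x * p) = Real.exp (-Fg x) := by
          rw [← Real.exp_add]; ring_nf
        simp only [hAe, hνedef, h7]
        rw [← Real.exp_mul]
        linear_combination (-(α x * g x ^ p)) * h8
      have e2 : νe x * β x ≤ Ae x * ω ^ p := by
        have h1 := hsmall x hx0
        rw [hνe x, ← Real.exp_mul] at h1
        have h2 : Real.exp (-Fg x) ≤ Real.exp (-F x * p) * Real.exp ((p - 1) * Fg x) := by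
          rw [← Real.exp_add]
          apply Real.exp_le_exp.mpr
          have h3 := hFle x hxm
          have h4 : p * F x ≤ p * Fg x :=
            mul_le_mul_of_nonneg_left h3 (by linarith only [hp])
          nlinarith only [h4]
        have h4 : νe x * β x ≤ (β x * Real.exp (-F x * p)) * Real.exp ((p - 1) * Fg x) := by
          have h5 := mul_le_mul_of_nonneg_left h2 (hβpos x)
          calc νe x * β x = β x * Real.exp (-Fg x) := by simp only [hνedef]; ring
          _ ≤ β x * (Real.exp (-F x * p) * Real.exp ((p - 1) * Fg x)) := h5
          _ = (β x * Real.exp (-F x * p)) * Real.exp ((p - 1) * Fg x) := by ring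
        calc νe x * β x ≤ (β x * Real.exp (-F x * p)) * Real.exp ((p - 1) * Fg x) := h4
        _ ≤ (ω ^ p * α x) * Real.exp ((p - 1) * Fg x) :=
            mul_le_mul_of_nonneg_right h1 (Real.exp_pos _).le
        _ = Ae x * ω ^ p := by simp only [hAe]; ring
      have e3 : Ae x * ((νe x * g x) ^ p + ω ^ p) ≤ Ae x * (νe x * g x + ω) ^ p :=
        mul_le_mul_of_nonneg_left
          (add_rpow_le (mul_nonneg hνex.le hgx0) hω.le hp.le) (hAepos x)
      have e4 : Ae x * φ x ^ p < KA * φ x ^ p := by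
        apply mul_lt_mul_of_pos_right hKAgt
        rw [hφxp]; exact hdpos
      have : V ≤ Ae x * φ x ^ p := by
        simp only [hφ]
        calc V = νe x * (α x * g x ^ p) + νe x * β x := by rw [hV]; ring
        _ ≤ Ae x * (νe x * g x) ^ p + Ae x * ω ^ p := by
            rw [e1]; linarith only [e2]
        _ = Ae x * ((νe x * g x) ^ p + ω ^ p) := by ring
        _ ≤ Ae x * (νe x * g x + ω) ^ p := e3
      rw [hr, ← hφxp]
      exact lt_of_le_of_lt this e4
    -- the margin
    set c : ℝ := νe x * (|K| + g x + 2) with hc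
    have hcnn : 0 ≤ c := by
      apply mul_nonneg hνex.le
      have := abs_nonneg K; linarith
    set η : ℝ := min 1 ((r - V) / (2 * (c + 1))) with hη
    have hηpos : 0 < η := lt_min one_pos (div_pos (by linarith only [hVr]) (by linarith only [hcnn]))
    have hηc : V + η * c < r := by
      have h1 : η ≤ (r - V) / (2 * (c + 1)) := min_le_right _ _
      have h2 : η * c ≤ (r - V) / (2 * (c + 1)) * c := mul_le_mul_of_nonneg_right h1 hcnn
      have h3 : (r - V) / (2 * (c + 1)) * c < r - V := by
        rw [div_mul_eq_mul_div, div_lt_iff₀ (by linarith only [hcnn] : (0:ℝ) < 2 * (c + 1))]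
        have h4 : 0 ≤ (r - V) * c := mul_nonneg (by linarith only [hVr]) hcnn
        have h5 : 0 < (r - V) * 2 := by linarith only [hVr]
        have h6 : (r - V) * (2 * (c + 1)) = (r - V) * c * 2 + (r - V) * 2 := by ring
        linarith only [h4, h5, h6]
      linarith only [h2, h3]
    have hη1 : η ≤ 1 := min_le_left _ _
    -- eventual facts
    have E0 : ∀ᶠ z in 𝓝[>] x, z ∈ Set.Ioc x t₀ :=
      Ioc_mem_nhdsGT_of_mem ⟨le_rfl, hxt⟩
    have hgder : HasDerivAt g (deriv g x) x := (hgdiff x).hasDerivAt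
    have E1 : ∀ᶠ z in 𝓝[>] x, g z - g x ≤ (deriv g x + η) * (z - x) := by
      have h1 : Tendsto (slope g x) (𝓝[>] x) (𝓝 (deriv g x)) :=
        (hasDerivAt_iff_tendsto_slope.mp hgder).mono_left
          (nhdsWithin_mono _ (fun z hz => ne_of_gt hz))
      have h2 : ∀ᶠ z in 𝓝[>] x, slope g x z < deriv g x + η :=
        h1.eventually_lt_const (by linarith only [hηpos])
      filter_upwards [h2, self_mem_nhdsWithin] with z h3 h4
      have h5 : 0 < z - x := sub_pos.mpr h4
      have h6 : (g z - g x) / (z - x) < deriv g x + η := by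
        rwa [slope_def_field] at h3
      linarith only [(div_lt_iff₀ h5).mp h6]
    have E2 : ∀ᶠ z in 𝓝[>] x, |g z - g x| ≤ η := by
      have h1 : Tendsto (fun z => g z - g x) (𝓝[>] x) (𝓝 0) := by
        have := ((hgdiff.continuous.tendsto x).mono_left
          (nhdsWithin_le_nhds (s := Set.Ioi x))).sub_const (g x)
        simpa using this
      have := h1.eventually (eventually_abs_sub_lt 0 hηpos)
      filter_upwards [this] with z hz
      simpa using hz.le
    have E3 : ∀ᶠ z in 𝓝[>] x, Real.exp (-(K * (z - x))) - 1 ≤ (-K + η) * (z - x) := by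
      have hder : HasDerivAt (fun u : ℝ => Real.exp (-(K * u))) (-K) 0 := by
        have h1 : HasDerivAt (fun u : ℝ => -(K * u)) (-K) 0 := by
          simpa using ((hasDerivAt_neg (0:ℝ)).const_mul K)
        simpa using h1.exp
      have h1 : Tendsto (slope (fun u : ℝ => Real.exp (-(K * u))) 0) (𝓝[>] (0:ℝ)) (𝓝 (-K)) :=
        (hasDerivAt_iff_tendsto_slope.mp hder).mono_left
          (nhdsWithin_mono _ (fun z hz => ne_of_gt hz))
      have h2 : ∀ᶠ u in 𝓝[>] (0:ℝ), slope (fun u : ℝ => Real.exp (-(K * u))) 0 u < -K + η :=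
        h1.eventually_lt_const (by linarith only [hηpos])
      have hmap : Tendsto (fun z => z - x) (𝓝[>] x) (𝓝[>] (0:ℝ)) := by
        apply tendsto_nhdsWithin_of_tendsto_nhds_of_eventually_within
        · have := (tendsto_id (x := 𝓝 x)).sub_const x
          simpa using this.mono_left (nhdsWithin_le_nhds (s := Set.Ioi x))
        · filter_upwards [self_mem_nhdsWithin] with z hz
          exact sub_pos.mpr (Set.mem_Ioi.mp hz)
      filter_upwards [hmap.eventually h2, self_mem_nhdsWithin] with z h3 h4
      have h5 : 0 < z - x := sub_pos.mpr h4
      have h6 : (Real.exp (-(K * (z - x))) - 1) / (z - x) < -K + η := by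
        simpa [slope_def_field] using h3
      linarith only [(div_lt_iff₀ h5).mp h6]
    have E4 : ∀ᶠ z in 𝓝[>] x, K * (z - x) ≤ Fg z - Fg x := by
      have h1 := primitive_slope hwγlsc hwγint' hwγfin hx hK2
      filter_upwards [h1, E0] with z h2 hz
      have hii1 : IntervalIntegrable (fun ξ => (wγ ξ).toReal) volume 0 x := hwγii x hxm
      have hii2 : IntervalIntegrable (fun ξ => (wγ ξ).toReal) volume x z :=
        (intervalIntegrable_iff_integrableOn_Ioc_of_le hz.1.le).mpr
          (hwγint'.mono_set (fun s hs => ⟨lt_of_le_of_lt hx0 hs.1, le_trans hs.2 hz.2⟩))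
      have h3 : Fg x + ∫ s in x..z, (wγ s).toReal = Fg z :=
        intervalIntegral.integral_add_adjacent_intervals hii1 hii2
      linarith only [h2, h3]
    have E5 : ∀ᶠ z in 𝓝[>] x, KA * (z - x) ≤ W z - W x := by
      have h1 := primitive_slope hwAlsc hwAint' hwAfin hx hKA2
      filter_upwards [h1, E0] with z h2 hz
      have hii1 : IntervalIntegrable (fun ξ => (wA ξ).toReal) volume 0 x :=
        (intervalIntegrable_iff_integrableOn_Ioc_of_le hx0).mpr
          (hwAint'.mono_set (Set.Ioc_subset_Ioc le_rfl hxt.le))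
      have hii2 : IntervalIntegrable (fun ξ => (wA ξ).toReal) volume x z :=
        (intervalIntegrable_iff_integrableOn_Ioc_of_le hz.1.le).mpr
          (hwAint'.mono_set (fun s hs => ⟨lt_of_le_of_lt hx0 hs.1, le_trans hs.2 hz.2⟩))
      have h3 : W x + ∫ s in x..z, (wA s).toReal = W z :=
        intervalIntegral.integral_add_adjacent_intervals hii1 hii2
      linarith only [h2, h3]
    -- combine
    filter_upwards [E0, E1, E2, E3, E4, E5, self_mem_nhdsWithin]
      with z hzm h1 h2 h3 h4 h5 hzx
    have hu : 0 < z - x := sub_pos.mpr hzx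
    have hzm' : z ∈ Set.Icc 0 t₀ := ⟨le_trans hx0 hzm.1.le, hzm.2⟩
    -- B side
    have hWxz : W x ≤ W z := by
      have h6 := mul_nonneg hKAnn hu.le
      linarith only [h5, h6]
    have hBzx : r * (z - x) ≤ B z - B x := by
      have ht := rpow_tangent (C := C) hp hWxz (hCW z hzm')
      have : d * (W z - W x) ≤ B z - B x := by
        simp only [hB, hd, hD]
        exact ht
      calc r * (z - x) = d * (KA * (z - x)) := by rw [hr]; ring
      _ ≤ d * (W z - W x) := mul_le_mul_of_nonneg_left h5 hdpos.le
      _ ≤ B z - B x := this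
    -- φ side
    have hgz0 : 0 ≤ g z := hg0 z (le_trans hx0 hzm.1.le)
    have hνez : νe z - νe x ≤ νe x * ((-K + η) * (z - x)) := by
      have e1 : νe z = νe x * Real.exp (-(Fg z - Fg x)) := by
        simp only [hνedef]; rw [← Real.exp_add]; ring_nf
      have e2 : Real.exp (-(Fg z - Fg x)) ≤ Real.exp (-(K * (z - x))) :=
        Real.exp_le_exp.mpr (by linarith only [h4])
      calc νe z - νe x = νe x * (Real.exp (-(Fg z - Fg x)) - 1) := by rw [e1]; ring
      _ ≤ νe x * (Real.exp (-(K * (z - x))) - 1) := by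
          apply mul_le_mul_of_nonneg_left _ hνex.le
          linarith only [e2]
      _ ≤ νe x * ((-K + η) * (z - x)) := mul_le_mul_of_nonneg_left h3 hνex.le
    have habs := abs_le.mp h2
    have hterm2 : g z * (νe z - νe x) ≤ νe x * (-K * g x + η * (|K| + g x + 1)) * (z - x) := by
      calc g z * (νe z - νe x) ≤ g z * (νe x * ((-K + η) * (z - x))) :=
            mul_le_mul_of_nonneg_left hνez hgz0
      _ = νe x * (g z * (-K + η)) * (z - x) := by ring
      _ ≤ νe x * (-K * g x + η * (|K| + g x + 1)) * (z - x) := by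
          apply mul_le_mul_of_nonneg_right _ hu.le
          apply mul_le_mul_of_nonneg_left _ hνex.le
          have b1 : -K * (g z - g x) ≤ |K| * η := by
            calc -K * (g z - g x) ≤ |(-K) * (g z - g x)| := le_abs_self _
            _ = |K| * |g z - g x| := by rw [abs_mul, abs_neg]
            _ ≤ |K| * η := mul_le_mul_of_nonneg_left h2 (abs_nonneg K)
          have b2 : g z * η ≤ (g x + 1) * η := by
            apply mul_le_mul_of_nonneg_right _ hηpos.le
            linarith only [habs.2, hη1]
          linarith only [b1, b2]
    have hderiv := hineq x hx0
    have hslope : φ z - φ x ≤ (V + η * c) * (z - x) := by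
      have e1 : φ z - φ x = νe x * (g z - g x) + g z * (νe z - νe x) := by
        simp only [hφ]; ring
      have e2 : νe x * (g z - g x) ≤ νe x * ((deriv g x + η) * (z - x)) :=
        mul_le_mul_of_nonneg_left h1 hνex.le
      have e3 : νe x * (deriv g x + η) + νe x * (-K * g x + η * (|K| + g x + 1))
          ≤ V + η * c := by
        have h6 : deriv g x - K * g x ≤ α x * g x ^ p + β x := by
          have h7 : (γ x - K) * g x ≤ 0 :=
            mul_nonpos_of_nonpos_of_nonneg (by linarith only [hKγ]) hgx0
          nlinarith only [hderiv, h7]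
        have e3' : νe x * (deriv g x - K * g x) ≤ νe x * (α x * g x ^ p + β x) :=
          mul_le_mul_of_nonneg_left h6 hνex.le
        simp only [hV, hc]
        linarith only [e3']
      have emul := mul_le_mul_of_nonneg_right e3 hu.le
      linarith only [e1, e2, hterm2, emul]
    have : φ z ≤ φ x + (V + η * c) * (z - x) := by linarith only [hslope]
    calc φ z ≤ φ x + (V + η * c) * (z - x) := this
    _ ≤ φ x + r * (z - x) := by
        have h7 := mul_le_mul_of_nonneg_right hηc.le hu.le
        linarith only [h7]
    _ = B x + r * (z - x) := by rw [hcontact]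
    _ ≤ B z := by linarith only [hBzx]
  -- apply the comparison principle
  have hmain : φ t₀ ≤ B t₀ := visc hφcont hBcont h0 key t₀ (Set.right_mem_Icc.mpr ht₀)
  -- conclude
  have ht₀m : t₀ ∈ Set.Icc 0 t₀ := Set.right_mem_Icc.mpr ht₀
  have hBle : B t₀ ≤ (C - (p - 1) * Iε) ^ (-q) := by
    apply Real.rpow_le_rpow_of_nonpos hCpos _ (by linarith [hqpos])
    have h1 := mul_lt_mul_of_pos_left (hWub t₀ ht₀m) hp1
    linarith only [h1]
  have hgt0 : g t₀ ≤ (B t₀ - ω) * Real.exp (Fg t₀) := by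
    have h1 : νe t₀ * g t₀ ≤ B t₀ - ω := by
      have := hmain; simp only [hφ] at this; linarith
    have h2 : g t₀ = (νe t₀ * g t₀) * Real.exp (Fg t₀) := by
      simp only [hνedef]
      rw [mul_comm (Real.exp _) (g t₀), mul_assoc, ← Real.exp_add]
      simp
    rw [h2]
    exact mul_le_mul_of_nonneg_right h1 (Real.exp_pos _).le
  have hωle : ω ≤ (C - (p - 1) * Iε) ^ (-q) :=
    le_trans (le_trans (hωφ t₀ ht₀m) hmain) hBle
  calc g t₀ ≤ (B t₀ - ω) * Real.exp (Fg t₀) := hgt0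
  _ ≤ ((C - (p - 1) * Iε) ^ (-q) - ω) * Real.exp (Fg t₀) := by
      apply mul_le_mul_of_nonneg_right (by linarith [hBle]) (Real.exp_pos _).le
  _ ≤ ((C - (p - 1) * Iε) ^ (-q) - ω) * Real.exp (M + ε) := by
      apply mul_le_mul_of_nonneg_left _ (by linarith [hωle])
      apply Real.exp_le_exp.mpr
      have h3 := hFge t₀ ht₀m
      have h4 := hM t₀ ht₀
      have h5 : F t₀ = ∫ ξ in (0:ℝ)..t₀, γ ξ := rfl
      linarith
  _ = Real.exp (M + ε) * ((C - (p - 1) * Iε) ^ (-q) - ω) := by ring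

theorem boundedness_thm23
    (g γ α β ν : ℝ → ℝ) (p ω M : ℝ) (hp : 1 < p) (hω : 0 < ω)
    (hγ : LocallyIntegrable γ) (hα : LocallyIntegrable α) (hβ : LocallyIntegrable β)
    (hαpos : ∀ t, 0 ≤ α t) (hβpos : ∀ t, 0 ≤ β t)
    (hg0 : ∀ t ≥ 0, 0 ≤ g t) (hgdiff : Differentiable ℝ g)
    (hineq : ∀ t ≥ 0, deriv g t ≤ γ t * g t + α t * g t ^ p + β t)
    (hν : ∀ t, ν t = Real.exp (-∫ ξ in (0:ℝ)..t, γ ξ))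
    (hsmall : ∀ t ≥ 0, β t * ν t ^ p ≤ ω ^ p * α t)
    (hαν : IntegrableOn (fun ξ => α ξ / ν ξ ^ (p - 1)) (Set.Ioi (0:ℝ)))
    (hinit : (p - 1) * (∫ ξ in Set.Ioi (0:ℝ), α ξ / ν ξ ^ (p - 1)) < (g 0 + ω) ^ (1 - p))
    (hM : ∀ t ≥ 0, (∫ ξ in (0:ℝ)..t, γ ξ) ≤ M) :
    ∀ t ≥ 0, g t ≤ Real.exp M *
      ((1 / ((g 0 + ω) ^ (1 - p) - (p - 1) * ∫ ξ in Set.Ioi (0:ℝ), α ξ / ν ξ ^ (p - 1)))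
        ^ (1 / (p - 1)) - ω) := by
  intro t ht
  have hp1 : (0:ℝ) < p - 1 := by linarith
  set I : ℝ := ∫ ξ in Set.Ioi (0:ℝ), α ξ / ν ξ ^ (p - 1) with hI
  set C : ℝ := (g 0 + ω) ^ (1 - p) with hC
  have hCI : 0 < C - (p - 1) * I := by linarith [hinit]
  set RHS : ℝ → ℝ := fun ε => Real.exp (M + ε) *
      ((C - (p - 1) * (Real.exp ((p - 1) * ε) * I + ε)) ^ (-(p - 1)⁻¹) - ω) with hRHS
  -- inner expression tends to C - (p-1)*I
  have htin : Tendsto (fun ε => C - (p - 1) * (Real.exp ((p - 1) * ε) * I + ε))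
      (𝓝[>] (0:ℝ)) (𝓝 (C - (p - 1) * I)) := by
    have hcont : Continuous (fun ε : ℝ => C - (p - 1) * (Real.exp ((p - 1) * ε) * I + ε)) := by
      fun_prop
    have := hcont.tendsto 0
    simp only [mul_zero, Real.exp_zero, one_mul, add_zero] at this
    exact this.mono_left nhdsWithin_le_nhds
  have hev : ∀ᶠ ε in 𝓝[>] (0:ℝ), g t ≤ RHS ε := by
    have hsm : ∀ᶠ ε in 𝓝[>] (0:ℝ),
        (p - 1) * (Real.exp ((p - 1) * ε) * I + ε) < C := by
      have h2 : Tendsto (fun ε => (p - 1) * (Real.exp ((p - 1) * ε) * I + ε))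
          (𝓝[>] (0:ℝ)) (𝓝 ((p - 1) * I)) := by
        have hcont : Continuous (fun ε : ℝ => (p - 1) * (Real.exp ((p - 1) * ε) * I + ε)) := by
          fun_prop
        have := hcont.tendsto 0
        simp only [mul_zero, Real.exp_zero, one_mul, add_zero] at this
        exact this.mono_left nhdsWithin_le_nhds
      exact h2.eventually_lt_const (by linarith [hCI])
    filter_upwards [hsm, self_mem_nhdsWithin] with ε h1 h2
    exact aux_bound g γ α β ν p ω M hp hω hγ hα hαpos hβpos hg0 hgdiff hineq hν hsmall
      hαν hM t ht ε h2 h1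
  have htR : Tendsto RHS (𝓝[>] (0:ℝ))
      (𝓝 (Real.exp M * ((C - (p - 1) * I) ^ (-(p - 1)⁻¹) - ω))) := by
    apply Tendsto.mul
    · have : Tendsto (fun ε : ℝ => Real.exp (M + ε)) (𝓝 (0:ℝ)) (𝓝 (Real.exp M)) := by
        have hcont : Continuous (fun ε : ℝ => Real.exp (M + ε)) := by fun_prop
        have := hcont.tendsto 0
        simpa using this
      exact this.mono_left nhdsWithin_le_nhds
    · apply Tendsto.sub_const
      exact ((Real.continuousAt_rpow_const _ _ (Or.inl hCI.ne')).tendsto).comp htin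
  have hfin : g t ≤ Real.exp M * ((C - (p - 1) * I) ^ (-(p - 1)⁻¹) - ω) :=
    ge_of_tendsto htR hev
  have heq : (C - (p - 1) * I) ^ (-(p - 1)⁻¹) = (1 / (C - (p - 1) * I)) ^ (1 / (p - 1)) := by
    rw [one_div, one_div, Real.inv_rpow hCI.le, ← Real.rpow_neg hCI.le]
  rw [← heq]
  exact hfin
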